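/- arXiv:1710.05761 — 2 statements merged into one kernel-verified Lean document; each statement's English description precedes it below -/
import Mathlib

section
/- Let M and N be binoids with M≠{∞}, N≠{∞} and both of finite combinatorial dimension. Then dim(M∧N) = dim M + dim N. -/
/-- A binoid: a commutative monoid (written additively) with an absorbing element `infty`. -/
class Binoid (N : Type*) extends AddCommMonoid N where
  infty : N
  add_infty : ∀ x : N, x + infty = infty

namespace Binoid

variable {N : Type*} [Binoid N]

theorem infty_add (x : N) : (infty : N) + x = infty := by
  rw [add_comm]; exact add_infty x

/-- `I ⊆ N` is an ideal of the binoid `N`. -/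
def IsIdeal (I : Set N) : Prop :=
  (infty : N) ∈ I ∧ ∀ a ∈ I, ∀ n : N, n + a ∈ I

/-- The ideal generated by a subset `S` of a binoid. -/
def span (S : Set N) : Set N :=
  insert (infty : N) {x : N | ∃ n : N, ∃ s ∈ S, x = n + s}

/-- The `q`-th Frobenius sum `[q]I` of an ideal: the ideal generated by `{q • a | a ∈ I}`. -/
def frob (q : ℕ) (I : Set N) : Set N :=
  span {x : N | ∃ a ∈ I, x = q • a}

/-- The set of units of a binoid. -/
def unitSet (N : Type*) [Binoid N] : Set N := {a : N | ∃ b : N, a + b = 0}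

/-- `N₊`, the set (ideal) of non-units of a binoid. -/
def plusSet (N : Type*) [Binoid N] : Set N := (unitSet N)ᶜ

/-- A binoid is semipositive if its unit group is finite. -/
def Semipositive (N : Type*) [Binoid N] : Prop := (unitSet N).Finite

/-- A binoid is positive if `0` is its only unit. -/
def Positive (N : Type*) [Binoid N] : Prop := unitSet N = {0}

/-- A binoid is finitely generated if it is generated, as a (commutative) monoid,
by finitely many elements. -/
def FG (N : Type*) [Binoid N] : Prop :=
  ∃ s : Finset N, AddSubmonoid.closure (s : Set N) = ⊤

/-- A binoid is cancellative if `a + c = b + c` with `c ≠ ∞` implies `a = b`. -/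
def Cancellative (N : Type*) [Binoid N] : Prop :=
  ∀ a b c : N, c ≠ infty → a + c = b + c → a = b

/-- A binoid is reduced if `∞` is its only nilpotent element. -/
def Reduced (N : Type*) [Binoid N] : Prop :=
  ∀ (a : N) (n : ℕ), 0 < n → n • a = (infty : N) → a = infty

/-- A binoid is torsion-free if `n • a = n • b` for some `n ≥ 1` implies `a = b`. -/
def TorsionFree (N : Type*) [Binoid N] : Prop :=
  ∀ (a b : N) (n : ℕ), 0 < n → n • a = n • b → a = b

/-- A binoid is integral if `N ∖ {∞}` is a submonoid. -/
def Integral (N : Type*) [Binoid N] : Prop :=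
  (0 : N) ≠ infty ∧ ∀ a b : N, a + b = (infty : N) → a = infty ∨ b = infty

/-- The radical of an ideal of a binoid. -/
def rad (I : Set N) : Set N := {a : N | ∃ k : ℕ, 0 < k ∧ k • a ∈ I}

/-- An `N₊`-primary ideal: an ideal whose radical is `N₊`. -/
def IsPrimaryIdeal (I : Set N) : Prop := IsIdeal I ∧ rad I = plusSet N

/-- A prime ideal of a binoid: a proper ideal whose complement is closed under addition. -/
def IsPrime (I : Set N) : Prop :=
  IsIdeal I ∧ I ≠ Set.univ ∧ ∀ a b : N, a ∉ I → b ∉ I → a + b ∉ I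

/-- A minimal prime ideal of a binoid. -/
def IsMinimalPrime (I : Set N) : Prop :=
  IsPrime I ∧ ∀ J : Set N, IsPrime J → J ⊆ I → J = I

/-- The set of lengths of strictly increasing chains of prime ideals of `N`. -/
def dimSet (N : Type*) [Binoid N] : Set ℕ :=
  {n : ℕ | ∃ c : Fin (n + 1) → Set N, (∀ i, IsPrime (c i)) ∧ StrictMono c}

/-- The combinatorial dimension of a binoid: the supremum of the lengths of strictly
increasing chains of prime ideals. -/
noncomputable def dim (N : Type*) [Binoid N] : ℕ := sSup (dimSet N)

/-- `#(N/[q]𝔫)`: the number of elements of the binoid `N/[q]𝔫`, not counting `∞`;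
equivalently, the number of elements of `N` outside of the ideal `[q]𝔫`. -/
noncomputable def hkOn (I : Set N) (q : ℕ) : ℕ := Set.ncard ((frob q I)ᶜ)

/-- The Hilbert–Kunz multiplicity of an (`N₊`-primary) ideal `𝔫` on `N` is `L`:
the limit of `#(N/[q]𝔫)/q^(dim N)` as `q → ∞` is `L`. -/
def IsHKMultOn (I : Set N) (L : ℝ) : Prop :=
  Filter.Tendsto (fun q : ℕ => (hkOn I q : ℝ) / (q : ℝ) ^ dim N) Filter.atTop (nhds L)

/-- The Hilbert–Kunz multiplicity of the binoid `N` is `L`. -/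
def IsHKMult (N : Type*) [Binoid N] (L : ℝ) : Prop :=
  IsHKMultOn (plusSet N) L

/-- The sum `I + J` of two subsets of a binoid. -/
def idealSum (I J : Set N) : Set N := {x : N | ∃ a ∈ I, ∃ b ∈ J, x = a + b}


/-- The additive congruence on `N` contracting the subset `I` to a point.
(When `I` is an ideal, the relation below is already a congruence.) -/
def quotCon (I : Set N) : AddCon N :=
  addConGen (fun a b => a = b ∨ (a ∈ I ∧ b ∈ I))

/-- The residue class binoid `N/I`, obtained by contracting the ideal `I` to `∞`. -/
def BQuot (I : Set N) : Type _ := (quotCon I).Quotient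

instance (I : Set N) : AddCommMonoid (BQuot I) :=
  inferInstanceAs (AddCommMonoid (quotCon I).Quotient)

/-- The canonical projection `N → N/I`. -/
def BQuot.mk (I : Set N) (a : N) : BQuot I := (a : (quotCon I).Quotient)

instance (I : Set N) : Binoid (BQuot I) :=
  { (inferInstance : AddCommMonoid (BQuot I)) with
    infty := BQuot.mk I infty
    add_infty := fun x => AddCon.induction_on x fun a => by
      show BQuot.mk I a + BQuot.mk I infty = BQuot.mk I infty
      show ((a + infty : N) : (quotCon I).Quotient) = ((infty : N) : (quotCon I).Quotient)
      rw [add_infty] }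

/-- The product of two binoids (with componentwise addition). -/
instance {M P : Type*} [Binoid M] [Binoid P] : Binoid (M × P) :=
  { (inferInstance : AddCommMonoid (M × P)) with
    infty := ((infty : M), (infty : P))
    add_infty := fun x => by
      show (x.1 + infty, x.2 + infty) = ((infty : M), (infty : P))
      rw [add_infty, add_infty] }

/-- The ideal of `M × P` consisting of pairs one of whose coordinates is `∞`. -/
def smashIdeal (M P : Type*) [Binoid M] [Binoid P] : Set (M × P) :=
  {x : M × P | x.1 = infty ∨ x.2 = infty}

/-- The smash product `M ∧ P` of two binoids. -/
def Smash (M P : Type*) [Binoid M] [Binoid P] : Type _ :=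
  BQuot (smashIdeal M P)

instance {M P : Type*} [Binoid M] [Binoid P] : AddCommMonoid (Smash M P) :=
  inferInstanceAs (AddCommMonoid (BQuot (smashIdeal M P)))

instance {M P : Type*} [Binoid M] [Binoid P] : Binoid (Smash M P) :=
  inferInstanceAs (Binoid (BQuot (smashIdeal M P)))

/-- The class of `(m, p)` in the smash product `M ∧ P`. -/
def Smash.mk {M P : Type*} [Binoid M] [Binoid P] (m : M) (p : P) : Smash M P :=
  BQuot.mk (smashIdeal M P) (m, p)


end Binoid

open Binoid

section DimSmashAux

open Binoid

variable {M N : Type*} [Binoid M] [Binoid N]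

lemma strictMono_fin_one {α : Type*} [Preorder α] (f : Fin 1 → α) : StrictMono f := by
  intro i j h
  exact absurd (Fin.lt_iff_val_lt_val.mp h) (by omega)

lemma strictMono_snoc {α : Type*} [Preorder α] {m : ℕ} (f : Fin (m + 1) → α) (v : α)
    (hf : StrictMono f) (hv : f (Fin.last m) < v) : StrictMono (Fin.snoc f v) := by
  intro i j hij
  rcases Fin.eq_castSucc_or_eq_last j with ⟨j', rfl⟩ | rfl
  · rcases Fin.eq_castSucc_or_eq_last i with ⟨i', rfl⟩ | rfl
    · rw [Fin.snoc_castSucc, Fin.snoc_castSucc]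
      exact hf (Fin.castSucc_lt_castSucc_iff.mp hij)
    · exact absurd (lt_trans (Fin.castSucc_lt_last j') hij) (lt_irrefl _)
  · rcases Fin.eq_castSucc_or_eq_last i with ⟨i', rfl⟩ | rfl
    · rw [Fin.snoc_castSucc, Fin.snoc_last]
      exact lt_of_le_of_lt (hf.monotone (Fin.le_last i')) hv
    · exact absurd hij (lt_irrefl _)

lemma chain_prod_split {α β : Type*} [PartialOrder α] [PartialOrder β] :
    ∀ (n : ℕ) (c : Fin (n + 1) → α × β), StrictMono c →
    ∃ a b, ∃ f : Fin (a + 1) → α, ∃ g : Fin (b + 1) → β,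
      n = a + b ∧ StrictMono f ∧ StrictMono g ∧
      f (Fin.last a) ≤ (c (Fin.last n)).1 ∧ g (Fin.last b) ≤ (c (Fin.last n)).2 ∧
      (∀ i, ∃ j, f i = (c j).1) ∧ (∀ i, ∃ j, g i = (c j).2) := by
  intro n
  induction n with
  | zero =>
    intro c _
    exact ⟨0, 0, fun _ => (c 0).1, fun _ => (c 0).2, rfl, strictMono_fin_one _,
      strictMono_fin_one _, le_rfl, le_rfl, fun _ => ⟨0, rfl⟩, fun _ => ⟨0, rfl⟩⟩
  | succ n ih =>
    intro c hc
    obtain ⟨a, b, f, g, hab, hf, hg, hfle, hgle, hfr, hgr⟩ :=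
      ih (fun i => c i.castSucc) (hc.comp Fin.strictMono_castSucc)
    have hlt : c (Fin.castSucc (Fin.last n)) < c (Fin.last (n + 1)) :=
      hc (Fin.castSucc_lt_last _)
    rcases Prod.lt_iff.mp hlt with ⟨h1, h2⟩ | ⟨h1, h2⟩
    · refine ⟨a + 1, b, Fin.snoc f (c (Fin.last (n + 1))).1, g, by omega,
        strictMono_snoc f _ hf (lt_of_le_of_lt hfle h1), hg, ?_, le_trans hgle h2, ?_, ?_⟩
      · rw [Fin.snoc_last]
      · intro i
        rcases Fin.eq_castSucc_or_eq_last i with ⟨i', rfl⟩ | rfl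
        · obtain ⟨j, hj⟩ := hfr i'
          exact ⟨j.castSucc, by rw [Fin.snoc_castSucc]; exact hj⟩
        · exact ⟨Fin.last (n + 1), by rw [Fin.snoc_last]⟩
      · intro i
        obtain ⟨j, hj⟩ := hgr i
        exact ⟨j.castSucc, hj⟩
    · refine ⟨a, b + 1, f, Fin.snoc g (c (Fin.last (n + 1))).2, by omega, hf,
        strictMono_snoc g _ hg (lt_of_le_of_lt hgle h2), le_trans hfle h1, ?_, ?_, ?_⟩
      · rw [Fin.snoc_last]
      · intro i
        obtain ⟨j, hj⟩ := hfr i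
        exact ⟨j.castSucc, hj⟩
      · intro i
        rcases Fin.eq_castSucc_or_eq_last i with ⟨i', rfl⟩ | rfl
        · obtain ⟨j, hj⟩ := hgr i'
          exact ⟨j.castSucc, by rw [Fin.snoc_castSucc]; exact hj⟩
        · exact ⟨Fin.last (n + 1), by rw [Fin.snoc_last]⟩

lemma smashIdeal_add_mem {a : M × N} (b : M × N) (ha : a ∈ smashIdeal M N) :
    a + b ∈ smashIdeal M N := by
  rcases ha with h | h
  · exact Or.inl (by show a.1 + b.1 = infty; rw [h, infty_add])
  · exact Or.inr (by show a.2 + b.2 = infty; rw [h, infty_add])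

/-- The smash congruence, as a bona fide `AddCon`. -/
def smashCon (M N : Type*) [Binoid M] [Binoid N] : AddCon (M × N) where
  r a b := a = b ∨ (a ∈ smashIdeal M N ∧ b ∈ smashIdeal M N)
  iseqv := by
    refine ⟨fun _ => Or.inl rfl, fun h => ?_, fun h1 h2 => ?_⟩
    · rcases h with h | h
      · exact Or.inl h.symm
      · exact Or.inr ⟨h.2, h.1⟩
    · rcases h1 with h1 | h1
      · rwa [h1]
      · rcases h2 with h2 | h2
        · exact Or.inr ⟨h1.1, h2 ▸ h1.2⟩
        · exact Or.inr ⟨h1.1, h2.2⟩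
  add' := by
    rintro w x y z (rfl | hwx) (rfl | hyz)
    · exact Or.inl rfl
    · exact Or.inr ⟨by rw [add_comm]; exact smashIdeal_add_mem _ hyz.1,
        by rw [add_comm]; exact smashIdeal_add_mem _ hyz.2⟩
    · exact Or.inr ⟨smashIdeal_add_mem _ hwx.1, smashIdeal_add_mem _ hwx.2⟩
    · exact Or.inr ⟨smashIdeal_add_mem _ hwx.1, smashIdeal_add_mem _ hwx.2⟩

lemma quotCon_smash_eq : quotCon (smashIdeal M N) = smashCon M N := by
  apply le_antisymm
  · exact AddCon.addConGen_le.2 fun a b h => h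
  · rw [AddCon.le_def]
    intro a b h
    exact AddConGen.Rel.of a b h

lemma smash_mk_eq_mk {m m' : M} {n n' : N} :
    Smash.mk m n = Smash.mk m' n' ↔
      ((m, n) = (m', n') ∨ ((m, n) ∈ smashIdeal M N ∧ (m', n') ∈ smashIdeal M N)) := by
  show ((m, n) : (quotCon (smashIdeal M N)).Quotient) = ((m', n') : _) ↔ _
  rw [AddCon.eq, quotCon_smash_eq]
  rfl

lemma smash_surj (x : Smash M N) : ∃ m n, x = Smash.mk m n :=
  AddCon.induction_on x fun y => ⟨y.1, y.2, rfl⟩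

lemma Smash.mk_add (m m' : M) (n n' : N) :
    Smash.mk m n + Smash.mk m' n' = Smash.mk (m + m') (n + n') := rfl

lemma smash_zero : (0 : Smash M N) = Smash.mk 0 0 := rfl

lemma smash_infty : (infty : Smash M N) = Smash.mk infty infty := rfl

lemma mk_split (m : M) (n : N) : Smash.mk m n = Smash.mk m 0 + Smash.mk 0 n := by
  rw [Smash.mk_add, add_zero, zero_add]

theorem Binoid.IsPrime.zero_not_mem {𝔭 : Set M} (h : IsPrime 𝔭) : (0 : M) ∉ 𝔭 := by
  intro h0
  apply h.2.1
  ext x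
  simp only [Set.mem_univ, iff_true]
  simpa using h.1.2 0 h0 x

/-- The prime of `M ∧ N` attached to a pair of primes. -/
def smashPrime (𝔭 : Set M) (𝔮 : Set N) : Set (Smash M N) :=
  {x | ∃ m n, x = Smash.mk m n ∧ (m ∈ 𝔭 ∨ n ∈ 𝔮)}

lemma mem_smashPrime {𝔭 : Set M} {𝔮 : Set N} (h𝔭 : (infty : M) ∈ 𝔭) (h𝔮 : (infty : N) ∈ 𝔮)
    {m : M} {n : N} : Smash.mk m n ∈ smashPrime 𝔭 𝔮 ↔ m ∈ 𝔭 ∨ n ∈ 𝔮 := by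
  constructor
  · rintro ⟨m', n', heq, h⟩
    rcases smash_mk_eq_mk.mp heq with h' | ⟨h1, _⟩
    · obtain ⟨rfl, rfl⟩ := Prod.ext_iff.mp h'
      exact h
    · rcases h1 with h1 | h1
      · have hm : m = infty := h1
        rw [hm]
        exact Or.inl h𝔭
      · have hn : n = infty := h1
        rw [hn]
        exact Or.inr h𝔮
  · intro h
    exact ⟨m, n, rfl, h⟩

lemma isPrime_smashPrime {𝔭 : Set M} {𝔮 : Set N} (h𝔭 : IsPrime 𝔭) (h𝔮 : IsPrime 𝔮) :
    IsPrime (smashPrime 𝔭 𝔮) := by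
  refine ⟨⟨?_, ?_⟩, ?_, ?_⟩
  · exact ⟨infty, infty, smash_infty, Or.inl h𝔭.1.1⟩
  · rintro a ⟨m, n, rfl, hmn⟩ x
    obtain ⟨m', n', rfl⟩ := smash_surj x
    rw [Smash.mk_add]
    exact ⟨m' + m, n' + n, rfl, hmn.imp (fun h => h𝔭.1.2 m h m') (fun h => h𝔮.1.2 n h n')⟩
  · intro hu
    have h00 : Smash.mk (0 : M) (0 : N) ∈ smashPrime 𝔭 𝔮 := hu ▸ Set.mem_univ _
    rcases (mem_smashPrime h𝔭.1.1 h𝔮.1.1).mp h00 with h | h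
    · exact h𝔭.zero_not_mem h
    · exact h𝔮.zero_not_mem h
  · intro a b ha hb hab
    obtain ⟨m, n, rfl⟩ := smash_surj a
    obtain ⟨m', n', rfl⟩ := smash_surj b
    rw [Smash.mk_add] at hab
    have ha' := (mem_smashPrime h𝔭.1.1 h𝔮.1.1).not.mp ha
    have hb' := (mem_smashPrime h𝔭.1.1 h𝔮.1.1).not.mp hb
    push_neg at ha' hb'
    rcases (mem_smashPrime h𝔭.1.1 h𝔮.1.1).mp hab with h | h
    · exact h𝔭.2.2 m m' ha'.1 hb'.1 h
    · exact h𝔮.2.2 n n' ha'.2 hb'.2 h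

lemma smashPrime_mono {𝔭 𝔭' : Set M} {𝔮 𝔮' : Set N} (h1 : 𝔭 ⊆ 𝔭') (h2 : 𝔮 ⊆ 𝔮') :
    smashPrime 𝔭 𝔮 ⊆ smashPrime 𝔭' 𝔮' := by
  rintro x ⟨m, n, rfl, h⟩
  exact ⟨m, n, rfl, h.imp (fun hm => h1 hm) (fun hn => h2 hn)⟩

/-- Pullback of a subset of the smash product along `m ↦ m ∧ 0`. -/
def pullM (e : Set (Smash M N)) : Set M := {m | Smash.mk m (0 : N) ∈ e}

/-- Pullback of a subset of the smash product along `n ↦ 0 ∧ n`. -/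
def pullN (e : Set (Smash M N)) : Set N := {n | Smash.mk (0 : M) n ∈ e}

lemma mk00_not_mem {e : Set (Smash M N)} (he : IsPrime e) :
    Smash.mk (0 : M) (0 : N) ∉ e := by
  intro h
  apply he.2.1
  ext x
  simp only [Set.mem_univ, iff_true]
  have hx := he.1.2 _ h x
  rwa [← smash_zero, add_zero] at hx

lemma isPrime_pullM {e : Set (Smash M N)} (he : IsPrime e) : IsPrime (pullM e) := by
  refine ⟨⟨?_, ?_⟩, ?_, ?_⟩
  · show Smash.mk (infty : M) (0 : N) ∈ e
    have h : Smash.mk (infty : M) (0 : N) = infty := by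
      rw [smash_infty]
      exact smash_mk_eq_mk.mpr (Or.inr ⟨Or.inl rfl, Or.inl rfl⟩)
    rw [h]
    exact he.1.1
  · intro a ha n
    show Smash.mk (n + a) (0 : N) ∈ e
    have h : Smash.mk (n + a) (0 : N) = Smash.mk n 0 + Smash.mk a 0 := by
      rw [Smash.mk_add, add_zero]
    rw [h]
    exact he.1.2 _ ha _
  · intro hu
    have h0 : (0 : M) ∈ pullM e := hu ▸ Set.mem_univ _
    exact mk00_not_mem he h0
  · intro a b ha hb hab
    have h : Smash.mk (a + b) (0 : N) = Smash.mk a 0 + Smash.mk b 0 := by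
      rw [Smash.mk_add, add_zero]
    exact he.2.2 _ _ ha hb (h ▸ hab)

lemma isPrime_pullN {e : Set (Smash M N)} (he : IsPrime e) : IsPrime (pullN e) := by
  refine ⟨⟨?_, ?_⟩, ?_, ?_⟩
  · show Smash.mk (0 : M) (infty : N) ∈ e
    have h : Smash.mk (0 : M) (infty : N) = infty := by
      rw [smash_infty]
      exact smash_mk_eq_mk.mpr (Or.inr ⟨Or.inr rfl, Or.inl rfl⟩)
    rw [h]
    exact he.1.1
  · intro a ha n
    show Smash.mk (0 : M) (n + a) ∈ e
    have h : Smash.mk (0 : M) (n + a) = Smash.mk 0 n + Smash.mk 0 a := by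
      rw [Smash.mk_add, add_zero]
    rw [h]
    exact he.1.2 _ ha _
  · intro hu
    have h0 : (0 : N) ∈ pullN e := hu ▸ Set.mem_univ _
    exact mk00_not_mem he h0
  · intro a b ha hb hab
    have h : Smash.mk (0 : M) (a + b) = Smash.mk 0 a + Smash.mk 0 b := by
      rw [Smash.mk_add, add_zero]
    exact he.2.2 _ _ ha hb (h ▸ hab)

lemma prime_eq_smashPrime {e : Set (Smash M N)} (he : IsPrime e) :
    e = smashPrime (pullM e) (pullN e) := by
  ext x
  obtain ⟨m, n, rfl⟩ := smash_surj x
  rw [mem_smashPrime (isPrime_pullM he).1.1 (isPrime_pullN he).1.1]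
  constructor
  · intro hx
    by_contra hcon
    push_neg at hcon
    rw [mk_split m n] at hx
    exact he.2.2 _ _ hcon.1 hcon.2 hx
  · rintro (h | h)
    · rw [mk_split, add_comm]
      exact he.1.2 _ h _
    · rw [mk_split]
      exact he.1.2 _ h _

lemma isPrime_plusSet (h0 : (0 : M) ≠ infty) : IsPrime (plusSet M) := by
  refine ⟨⟨?_, ?_⟩, ?_, ?_⟩
  · rintro ⟨b, hb⟩
    exact h0 (by rw [← hb, infty_add])
  · rintro a ha n ⟨c, hc⟩
    refine ha ⟨n + c, ?_⟩
    rw [← hc]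
    abel
  · intro hu
    have h0' : (0 : M) ∈ plusSet M := hu ▸ Set.mem_univ _
    exact h0' ⟨0, add_zero 0⟩
  · intro a b ha hb hab
    rcases Set.notMem_compl_iff.mp ha with ⟨a', ha'⟩
    rcases Set.notMem_compl_iff.mp hb with ⟨b', hb'⟩
    refine hab ⟨a' + b', ?_⟩
    rw [show a + b + (a' + b') = a + a' + (b + b') by abel, ha', hb', add_zero]

lemma dim_sum_mem {dM dN : ℕ} (cM : Fin (dM + 1) → Set M) (cN : Fin (dN + 1) → Set N)
    (hcMp : ∀ i, IsPrime (cM i)) (hcNp : ∀ i, IsPrime (cN i))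
    (hcMm : StrictMono cM) (hcNm : StrictMono cN) :
    dM + dN ∈ dimSet (Smash M N) := by
  refine ⟨fun i => smashPrime (cM ⟨min i.1 dM, by omega⟩) (cN ⟨min (i.1 - dM) dN, by omega⟩),
    fun i => isPrime_smashPrime (hcMp _) (hcNp _), ?_⟩
  intro i j hij
  have hi : i.1 < dM + dN + 1 := i.isLt
  have hj : j.1 < dM + dN + 1 := j.isLt
  have hij' : i.1 < j.1 := hij
  have hle : smashPrime (cM ⟨min i.1 dM, by omega⟩) (cN ⟨min (i.1 - dM) dN, by omega⟩) ⊆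
      smashPrime (cM ⟨min j.1 dM, by omega⟩) (cN ⟨min (j.1 - dM) dN, by omega⟩) :=
    smashPrime_mono (hcMm.monotone (by simp only [Fin.mk_le_mk]; omega))
      (hcNm.monotone (by simp only [Fin.mk_le_mk]; omega))
  refine lt_of_le_of_ne hle ?_
  intro heq0
  have heq : smashPrime (cM ⟨min i.1 dM, by omega⟩) (cN ⟨min (i.1 - dM) dN, by omega⟩) =
      smashPrime (cM ⟨min j.1 dM, by omega⟩) (cN ⟨min (j.1 - dM) dN, by omega⟩) := heq0
  rcases lt_or_ge i.1 dM with hcase | hcase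
  · have hlt : (⟨min i.1 dM, by omega⟩ : Fin (dM + 1)) < ⟨min j.1 dM, by omega⟩ := by
      simp only [Fin.mk_lt_mk]; omega
    obtain ⟨m, hmj, hmi⟩ := Set.exists_of_ssubset (hcMm hlt)
    have hin : Smash.mk m (0 : N) ∈
        smashPrime (cM ⟨min j.1 dM, by omega⟩) (cN ⟨min (j.1 - dM) dN, by omega⟩) :=
      (mem_smashPrime (hcMp _).1.1 (hcNp _).1.1).mpr (Or.inl hmj)
    rw [← heq] at hin
    rcases (mem_smashPrime (hcMp _).1.1 (hcNp _).1.1).mp hin with h | h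
    · exact hmi h
    · exact (hcNp _).zero_not_mem h
  · have hlt : (⟨min (i.1 - dM) dN, by omega⟩ : Fin (dN + 1)) < ⟨min (j.1 - dM) dN, by omega⟩ := by
      simp only [Fin.mk_lt_mk]; omega
    obtain ⟨x, hxj, hxi⟩ := Set.exists_of_ssubset (hcNm hlt)
    have hin : Smash.mk (0 : M) x ∈
        smashPrime (cM ⟨min j.1 dM, by omega⟩) (cN ⟨min (j.1 - dM) dN, by omega⟩) :=
      (mem_smashPrime (hcMp _).1.1 (hcNp _).1.1).mpr (Or.inr hxj)
    rw [← heq] at hin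
    rcases (mem_smashPrime (hcMp _).1.1 (hcNp _).1.1).mp hin with h | h
    · exact (hcMp _).zero_not_mem h
    · exact hxi h

end DimSmashAux


/-- **Statement 8.** Let `M` and `N` be binoids with `M ≠ {∞}`, `N ≠ {∞}`, both of finite
combinatorial dimension. Then `dim (M∧N) = dim M + dim N`. -/
theorem dim_smash
    {M N : Type*} [Binoid M] [Binoid N]
    (hM : (0 : M) ≠ Binoid.infty) (hN : (0 : N) ≠ Binoid.infty)
    (hdM : BddAbove (dimSet M)) (hdN : BddAbove (dimSet N)) :
    dim (Smash M N) = dim M + dim N := by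
  have hneM : (dimSet M).Nonempty :=
    ⟨0, fun _ => plusSet M, fun _ => isPrime_plusSet hM, strictMono_fin_one _⟩
  have hneN : (dimSet N).Nonempty :=
    ⟨0, fun _ => plusSet N, fun _ => isPrime_plusSet hN, strictMono_fin_one _⟩
  obtain ⟨cM, hcMp, hcMm⟩ : ∃ c : Fin (dim M + 1) → Set M,
      (∀ i, IsPrime (c i)) ∧ StrictMono c := Nat.sSup_mem hneM hdM
  obtain ⟨cN, hcNp, hcNm⟩ : ∃ c : Fin (dim N + 1) → Set N,
      (∀ i, IsPrime (c i)) ∧ StrictMono c := Nat.sSup_mem hneN hdN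
  have hmem : dim M + dim N ∈ dimSet (Smash M N) :=
    dim_sum_mem cM cN hcMp hcNp hcMm hcNm
  have hub : ∀ n ∈ dimSet (Smash M N), n ≤ dim M + dim N := by
    rintro n ⟨e, hep, hemono⟩
    have hpcmono : StrictMono (fun i => (pullM (e i), pullN (e i)) :
        Fin (n + 1) → Set M × Set N) := by
      intro i j hij
      have hlt := hemono hij
      have hle : (pullM (e i), pullN (e i)) ≤ (pullM (e j), pullN (e j)) :=
        ⟨fun m hm => hlt.le hm, fun x hx => hlt.le hx⟩
      refine lt_of_le_of_ne hle ?_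
      intro heq
      apply hlt.ne
      rw [prime_eq_smashPrime (hep i), prime_eq_smashPrime (hep j),
        show pullM (e i) = pullM (e j) from congrArg Prod.fst heq,
        show pullN (e i) = pullN (e j) from congrArg Prod.snd heq]
    obtain ⟨a, b, f, g, hab, hf, hg, -, -, hfr, hgr⟩ := chain_prod_split n _ hpcmono
    have ha : a ∈ dimSet M := by
      refine ⟨f, fun i => ?_, hf⟩
      obtain ⟨j, hj⟩ := hfr i
      rw [hj]
      exact isPrime_pullM (hep j)
    have hb : b ∈ dimSet N := by
      refine ⟨g, fun i => ?_, hg⟩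
      obtain ⟨j, hj⟩ := hgr i
      rw [hj]
      exact isPrime_pullN (hep j)
    calc n = a + b := hab
      _ ≤ dim M + dim N := add_le_add (le_csSup hdM ha) (le_csSup hdN hb)
  exact le_antisymm (csSup_le ⟨_, hmem⟩ hub) (le_csSup ⟨_, fun n hn => hub n hn⟩ hmem)
end

section
/- Let N be a finitely generated, semipositive binoid, I an ideal of N and J an N₊-primary ideal of N. Then all four sets below are finite and #(N/J) + #((I∩J)/(I+J)) = #(I/(I+J)) + #((N/I)/(J+(N/I))). -/
open Binoid


section EulerAux

open Binoid

variable {N : Type*} [Binoid N]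

/-- The units of a binoid form an additive submonoid. -/
private def unitSubmonoid (N : Type*) [Binoid N] : AddSubmonoid N where
  carrier := unitSet N
  zero_mem' := ⟨0, add_zero 0⟩
  add_mem' := by
    rintro a b ⟨a', ha⟩ ⟨b', hb⟩
    exact ⟨a' + b', by rw [add_add_add_comm, ha, hb, add_zero]⟩

private lemma exists_rep {s : Finset N} (hs : AddSubmonoid.closure (s : Set N) = ⊤) (x : N) :
    ∃ f : N → ℕ, x = ∑ g ∈ s, f g • g := by
  classical
  have hx : x ∈ AddSubmonoid.closure (s : Set N) := hs ▸ AddSubmonoid.mem_top x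
  induction hx using AddSubmonoid.closure_induction with
  | mem g hg =>
    refine ⟨fun y => if y = g then 1 else 0, ?_⟩
    rw [show ∑ y ∈ s, (if y = g then (1:ℕ) else 0) • y = ∑ y ∈ s, (if y = g then g else 0) from
      Finset.sum_congr rfl fun y _ => by split_ifs with h <;> simp [h]]
    rw [Finset.sum_ite_eq' s g fun _ => g, if_pos (Finset.mem_coe.1 hg)]
  | zero => exact ⟨fun _ => 0, by simp⟩
  | add x y hx hy ihx ihy =>
    obtain ⟨f₁, h₁⟩ := ihx
    obtain ⟨f₂, h₂⟩ := ihy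
    refine ⟨fun g => f₁ g + f₂ g, ?_⟩
    simp only [add_nsmul, Finset.sum_add_distrib, ← h₁, ← h₂]

/-- The congruence contracting an ideal, described explicitly. -/
private def idealCon (I : Set N) (hI : IsIdeal I) : AddCon N where
  r a b := a = b ∨ (a ∈ I ∧ b ∈ I)
  iseqv :=
    { refl := fun _ => Or.inl rfl
      symm := fun h => h.elim (fun h => Or.inl h.symm) fun h => Or.inr ⟨h.2, h.1⟩
      trans := by
        rintro a b c (rfl | h1) h2
        · exact h2
        · rcases h2 with rfl | h2
          · exact Or.inr h1
          · exact Or.inr ⟨h1.1, h2.2⟩ }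
  add' := @fun a b c d h1 h2 => by
    rcases h1 with rfl | ⟨ha, hb⟩
    · rcases h2 with rfl | ⟨hc, hd⟩
      · exact Or.inl rfl
      · exact Or.inr ⟨hI.2 c hc a, hI.2 d hd a⟩
    · exact Or.inr ⟨by rw [add_comm]; exact hI.2 a ha c, by rw [add_comm]; exact hI.2 b hb d⟩

private lemma quotCon_eq (I : Set N) (hI : IsIdeal I) : quotCon I = idealCon I hI := by
  have h : (fun a b => a = b ∨ (a ∈ I ∧ b ∈ I)) = ⇑(idealCon I hI) := rfl
  rw [quotCon, h, AddCon.addConGen_of_addCon]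

private lemma mk_eq_mk {I : Set N} (hI : IsIdeal I) {a b : N} :
    BQuot.mk I a = BQuot.mk I b ↔ (a = b ∨ (a ∈ I ∧ b ∈ I)) := by
  show ((a : (quotCon I).Quotient) = (b : (quotCon I).Quotient)) ↔ _
  rw [AddCon.eq, quotCon_eq I hI]
  exact Iff.rfl

private lemma mk_add {I : Set N} (a b : N) :
    BQuot.mk I a + BQuot.mk I b = BQuot.mk I (a + b) := rfl

private lemma mk_surj {I : Set N} (y : BQuot I) : ∃ a : N, y = BQuot.mk I a :=
  AddCon.induction_on (C := fun y => ∃ a : N, y = BQuot.mk I a) y fun a => ⟨a, rfl⟩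

private lemma compl_finite_of_primary (hfg : FG N) (hsp : Semipositive N)
    {J : Set N} (hJ : IsPrimaryIdeal J) : (Jᶜ).Finite := by
  classical
  obtain ⟨s, hs⟩ := hfg
  have hex : ∀ g ∈ plusSet N, ∃ m : ℕ, 0 < m ∧ m • g ∈ J := by
    intro g hg
    have : g ∈ rad J := hJ.2.symm ▸ hg
    exact this
  set k : N → ℕ := fun g => if h : g ∈ plusSet N then (hex g h).choose else 0 with hk
  set K : ℕ := 1 + ∑ g ∈ s, k g with hKdef
  have hK : ∀ g ∈ s, g ∈ plusSet N → K • g ∈ J := by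
    intro g hgs hgp
    have h1 : k g ≤ K :=
      le_trans (Finset.single_le_sum (f := k) (fun _ _ => Nat.zero_le _) hgs)
        (Nat.le_add_left _ 1)
    have h2 : k g • g ∈ J := by
      rw [hk]; simp only [dif_pos hgp]
      exact (hex g hgp).choose_spec.2
    rw [← Nat.sub_add_cancel h1, add_nsmul]
    exact hJ.1.2 _ h2 _
  set t : Finset N := s.filter (fun g => g ∈ plusSet N) with ht
  have hsplit : ∀ x ∉ J, ∃ u ∈ unitSet N, ∃ F : {g // g ∈ t} → Fin (K + 1),
      x = u + ∑ g ∈ t.attach, (F g : ℕ) • (g : N) := by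
    intro x hxJ
    obtain ⟨f, hf⟩ := exists_rep hs x
    rw [← Finset.sum_filter_add_sum_filter_not s (fun g => g ∈ plusSet N)] at hf
    have hu : (∑ g ∈ s.filter (fun g => ¬ g ∈ plusSet N), f g • g) ∈ unitSet N := by
      refine AddSubmonoid.sum_mem (unitSubmonoid N) ?_
      intro g hg
      have hgu : g ∈ unitSet N := by
        have := (Finset.mem_filter.1 hg).2
        simpa [plusSet] using this
      exact AddSubmonoid.nsmul_mem (unitSubmonoid N) hgu _
    have hb : ∀ g ∈ t, f g < K + 1 := by
      intro g hgt
      by_contra hge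
      push_neg at hge
      have hgs : g ∈ s := (Finset.mem_filter.1 hgt).1
      have hgp : g ∈ plusSet N := (Finset.mem_filter.1 hgt).2
      have hxform : x = ∑ g' ∈ s, f g' • g' := by
        rw [hf]
        exact Finset.sum_filter_add_sum_filter_not s _ _
      have hKle : K ≤ f g := le_trans (Nat.le_succ K) hge
      have hsmul : f g • g = (f g - K) • g + K • g := by
        rw [← add_nsmul, Nat.sub_add_cancel hKle]
      have hxeq : x = ((f g - K) • g + ∑ g' ∈ s.erase g, f g' • g') + K • g := by
        calc x = ∑ g' ∈ s, f g' • g' := hxform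
          _ = f g • g + ∑ g' ∈ s.erase g, f g' • g' :=
              (Finset.add_sum_erase s (fun g' => f g' • g') hgs).symm
          _ = ((f g - K) • g + K • g) + ∑ g' ∈ s.erase g, f g' • g' := by rw [hsmul]
          _ = ((f g - K) • g + ∑ g' ∈ s.erase g, f g' • g') + K • g := add_right_comm _ _ _
      rw [hxeq] at hxJ
      exact hxJ (hJ.1.2 _ (hK g hgs hgp) _)
    refine ⟨_, hu, fun g => ⟨f g, hb g g.2⟩, ?_⟩
    rw [add_comm] at hf
    rw [hf]
    congr 1
    exact (Finset.sum_attach t (fun g => f g • g)).symm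
  have hfin : (Set.image (fun p : N × ({g // g ∈ t} → Fin (K + 1)) =>
      p.1 + ∑ g ∈ t.attach, (p.2 g : ℕ) • (g : N)) (unitSet N ×ˢ Set.univ)).Finite :=
    (hsp.prod Set.finite_univ).image _
  refine hfin.subset ?_
  intro x hx
  obtain ⟨u, hu, F, hxF⟩ := hsplit x hx
  exact ⟨(u, F), ⟨hu, trivial⟩, hxF.symm⟩

private lemma pi_nat_isPWO {ι : Type*} [Finite ι] (S : Set (ι → ℕ)) : S.IsPWO :=
  Set.isPWO_of_wellQuasiOrderedLE S

private lemma exists_ideal_basis (hfg : FG N) {I : Set N} (hI : IsIdeal I) :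
    ∃ B : Set N, B.Finite ∧ B ⊆ I ∧ ∀ x ∈ I, ∃ n : N, ∃ b ∈ B, x = n + b := by
  classical
  obtain ⟨s, hs⟩ := hfg
  set φ : ({g // g ∈ s} → ℕ) → N := fun f => ∑ g ∈ s.attach, f g • (g : N) with hφ
  have hsurj : ∀ x : N, ∃ f, φ f = x := by
    intro x
    obtain ⟨f, hf⟩ := exists_rep hs x
    exact ⟨fun g => f g, by rw [hφ]; simp only; rw [Finset.sum_attach s (fun g => f g • g), hf]⟩
  have hsub : ∀ f m : {g // g ∈ s} → ℕ, m ≤ f → φ f = φ (f - m) + φ m := by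
    intro f m h
    rw [hφ]; simp only [← Finset.sum_add_distrib]
    refine Finset.sum_congr rfl fun g _ => ?_
    rw [← add_nsmul]
    congr 1
    exact (Nat.sub_add_cancel (h g)).symm
  set S : Set ({g // g ∈ s} → ℕ) := φ ⁻¹' I with hS
  set M : Set ({g // g ∈ s} → ℕ) := {f ∈ S | ∀ g ∈ S, g ≤ f → g = f} with hM
  have hMfin : M.Finite := by
    have hanti : IsAntichain (· ≤ ·) M := by
      intro a ha b hb hne hle
      exact hne (hb.2 a ha.1 hle)
    exact hanti.finite_of_partiallyWellOrderedOn (pi_nat_isPWO M)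
  have hdom : ∀ f ∈ S, ∃ m ∈ M, m ≤ f := by
    intro f hf
    have hWF : Set.IsWF {g ∈ S | g ≤ f} := (pi_nat_isPWO _).isWF
    have hne : {g ∈ S | g ≤ f}.Nonempty := ⟨f, hf, le_refl f⟩
    refine ⟨hWF.min hne, ⟨(hWF.min_mem hne).1, ?_⟩, (hWF.min_mem hne).2⟩
    intro g hg hle
    by_contra hne'
    exact hWF.not_lt_min hne ⟨hg, le_trans hle (hWF.min_mem hne).2⟩ (lt_of_le_of_ne hle hne')
  refine ⟨φ '' M, hMfin.image φ, ?_, ?_⟩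
  · rintro _ ⟨m, hm, rfl⟩
    exact hm.1
  · intro x hx
    obtain ⟨f, rfl⟩ := hsurj x
    obtain ⟨m, hm, hle⟩ := hdom f hx
    exact ⟨φ (f - m), φ m, ⟨m, hm, rfl⟩, hsub f m hle⟩

end EulerAux

/-- **Statement 11.** Let `N` be a finitely generated, semipositive binoid, `I` an ideal of
`N` and `J` an `N₊`-primary ideal of `N`. Then the four sets underlying `N/J`,
`(I∩J)/(I+J)`, `I/(I+J)` and `(N/I)/(J+(N/I))` are finite (where the distinguished point
is not counted) and `#(N/J) + #((I∩J)/(I+J)) = #(I/(I+J)) + #((N/I)/(J+(N/I)))`. -/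
theorem euler_relation_of_ideals
    {N : Type*} [Binoid N]
    (hfg : FG N) (hsp : Semipositive N)
    (I J : Set N) (hI : IsIdeal I) (hJ : IsPrimaryIdeal J) :
    (Jᶜ).Finite ∧
    ((I ∩ J) \ idealSum I J).Finite ∧
    (I \ idealSum I J).Finite ∧
    ({y : BQuot I | ∃ a ∈ J, ∃ x : BQuot I, y = BQuot.mk I a + x}ᶜ).Finite ∧
    (Jᶜ).ncard + ((I ∩ J) \ idealSum I J).ncard
      = (I \ idealSum I J).ncard
        + ({y : BQuot I | ∃ a ∈ J, ∃ x : BQuot I, y = BQuot.mk I a + x}ᶜ).ncard := by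
  classical
  have hJc : (Jᶜ).Finite := compl_finite_of_primary hfg hsp hJ
  have hJideal := hJ.1
  have hIJ_sub : idealSum I J ⊆ J := by
    rintro _ ⟨a, _, b, hb, rfl⟩
    exact hJideal.2 b hb a
  obtain ⟨B, hBfin, hBI, hBspan⟩ := exists_ideal_basis hfg hI
  have hIfin : (I \ idealSum I J).Finite := by
    apply Set.Finite.subset ((hJc.prod hBfin).image (fun p => p.1 + p.2))
    rintro x ⟨hxI, hxn⟩
    obtain ⟨n, b, hb, rfl⟩ := hBspan x hxI
    refine ⟨(n, b), ⟨?_, hb⟩, rfl⟩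
    intro hnJ
    exact hxn ⟨b, hBI hb, n, hnJ, add_comm n b⟩
  have hIJfin : ((I ∩ J) \ idealSum I J).Finite :=
    hIfin.subset (fun x hx => ⟨hx.1.1, hx.2⟩)
  set C := {y : BQuot I | ∃ a ∈ J, ∃ x : BQuot I, y = BQuot.mk I a + x} with hC
  have hCeq : Cᶜ = BQuot.mk I '' (Jᶜ \ I) := by
    ext y
    constructor
    · intro hy
      obtain ⟨b, rfl⟩ := mk_surj y
      by_cases hbJ : b ∈ J
      · exact absurd ⟨b, hbJ, BQuot.mk I 0, by rw [mk_add, add_zero]⟩ hy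
      by_cases hbI : b ∈ I
      · exfalso
        apply hy
        refine ⟨infty, hJideal.1, BQuot.mk I 0, ?_⟩
        rw [mk_add, add_zero]
        exact (mk_eq_mk hI).2 (Or.inr ⟨hbI, hI.1⟩)
      · exact ⟨b, ⟨hbJ, hbI⟩, rfl⟩
    · rintro ⟨b, ⟨hbJ, hbI⟩, rfl⟩ hyC
      obtain ⟨a, haJ, x, hx⟩ := hyC
      obtain ⟨n, rfl⟩ := mk_surj x
      rw [mk_add] at hx
      rcases (mk_eq_mk hI).1 hx with hbe | h
      · apply hbJ
        rw [hbe, add_comm]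
        exact hJideal.2 a haJ n
      · exact hbI h.1
  have hCfin : (Cᶜ).Finite := by
    rw [hCeq]
    exact (hJc.subset (fun x hx => hx.1)).image _
  have hCcard : (Cᶜ).ncard = (Jᶜ \ I).ncard := by
    rw [hCeq]
    apply Set.ncard_image_of_injOn
    intro a ha b hb hab
    rcases (mk_eq_mk hI).1 hab with h | h
    · exact h
    · exact absurd h.1 ha.2
  have h1 : Jᶜ = (I \ J) ∪ (Jᶜ \ I) := by
    ext x
    simp only [Set.mem_union, Set.mem_diff, Set.mem_compl_iff]
    tauto
  have hd1 : Disjoint (I \ J) (Jᶜ \ I) := by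
    rw [Set.disjoint_left]
    rintro x ⟨hxI, _⟩ ⟨_, hxnI⟩
    exact hxnI hxI
  have h2 : I \ idealSum I J = (I \ J) ∪ ((I ∩ J) \ idealSum I J) := by
    ext x
    constructor
    · rintro ⟨hxI, hxn⟩
      by_cases hxJ : x ∈ J
      · exact Or.inr ⟨⟨hxI, hxJ⟩, hxn⟩
      · exact Or.inl ⟨hxI, hxJ⟩
    · rintro (⟨hxI, hxJ⟩ | ⟨⟨hxI, _⟩, hxn⟩)
      · exact ⟨hxI, fun hmem => hxJ (hIJ_sub hmem)⟩
      · exact ⟨hxI, hxn⟩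
  have hd2 : Disjoint (I \ J) ((I ∩ J) \ idealSum I J) := by
    rw [Set.disjoint_left]
    rintro x ⟨_, hxJ⟩ ⟨⟨_, hxJ'⟩, _⟩
    exact hxJ hxJ'
  have hf1 : (I \ J).Finite := hJc.subset (fun x hx => hx.2)
  have hf2 : (Jᶜ \ I).Finite := hJc.subset (fun x hx => hx.1)
  refine ⟨hJc, hIJfin, hIfin, hCfin, ?_⟩
  rw [h1, h2, Set.ncard_union_eq hd1 hf1 hf2, Set.ncard_union_eq hd2 hf1 hIJfin, hCcard]
  omega
end
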